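/- Let ω be a nontrivial real-valued 2-weight on a finite PCS Σ and τ : Σ × Σ → (0,1) thresholds with τ_{ab} = τ_{ba} = τ_{a*b}. Define G by: (a,b) ∈ G iff {a,a*} ∩ {b,b*} = ∅ and either ω_{ab*} < min(τ_{ab}·ω_∅, ω_{ab}, ω_{a*b*}, ω_{a*b}) or ω_{ab*} = ω_{a*b} = 0, where ω_∅ := ω_{aa} + ω_{a*a*}. Then G is a non-degenerate PCR: no element a satisfies both a ≤_G a* and a* ≤_G a. -/
import Mathlib


universe u v

structure PCS (α : Type*) where
  star : α → α
  zero : α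
  star_star : ∀ a, star (star a) = a
  star_ne_self : ∀ a, star a ≠ a

variable {α : Type*}

/-- A pointed complemented relation (PCR) over the PCS `P`. -/
def IsPCR (P : PCS α) (G : Set (α × α)) : Prop :=
  (∀ a, (P.zero, a) ∈ G) ∧ ∀ a b, (a, b) ∈ G ↔ (P.star b, P.star a) ∈ G

/-- `a ≤_G b`: the reflexive-transitive closure of the relation `G`. -/
def pcrLe (G : Set (α × α)) (a b : α) : Prop :=
  Relation.ReflTransGen (fun x y => (x, y) ∈ G) a b

/-- A set `S` is `G`-coherent if no `a, b ∈ S` satisfy `a ≤_G b*`. -/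
def Coherent (P : PCS α) (G : Set (α × α)) (S : Set α) : Prop :=
  ∀ a ∈ S, ∀ b ∈ S, ¬ pcrLe G a (P.star b)

/-- Forward closure `↑S = {b | ∃ a ∈ S, a ≤_G b}`. -/
def upClosure (G : Set (α × α)) (S : Set α) : Set α :=
  {b | ∃ a ∈ S, pcrLe G a b}

/-- Maximal `G`-coherent subsets; the members of the dual space `G°`. -/
def MaxCoherent (P : PCS α) (G : Set (α × α)) (S : Set α) : Prop :=
  Coherent P G S ∧ ∀ T, Coherent P G T → S ⊆ T → S = T

/-- `G` is non-degenerate: no `a` satisfies both `a ≤_G a*` and `a* ≤_G a`. -/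
def Nondegenerate (P : PCS α) (G : Set (α × α)) : Prop :=
  ∀ a, ¬ (pcrLe G a (P.star a) ∧ pcrLe G (P.star a) a)

/-- A complete `*`-selection: exactly one of `a`, `a*` belongs to `S`, for each `a`. -/
def CompleteSel (P : PCS α) (S : Set α) : Prop :=
  ∀ a, Xor' (a ∈ S) (P.star a ∈ S)

/-- The half-space `⟨S;G⟩ = {u ∈ G° : S ⊆ u}`. -/
def halfspace (P : PCS α) (G : Set (α × α)) (S : Set α) : Set (Set α) :=
  {u | MaxCoherent P G u ∧ S ⊆ u}

/-- Coherent projection `coh_G(T) = ↑T ∖ (↑T)*`. -/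
def cohProj (P : PCS α) (G : Set (α × α)) (T : Set α) : Set α :=
  upClosure G T \ (P.star '' upClosure G T)

/-- Morphisms of PCRs. -/
def IsPCRHom {β : Type*} (P : PCS α) (Q : PCS β) (G : Set (α × α)) (H : Set (β × β))
    (f : α → β) : Prop :=
  f P.zero = Q.zero ∧ (∀ a, f (P.star a) = Q.star (f a)) ∧
    ∀ a b, (a, b) ∈ G → pcrLe H (f a) (f b)

/-- A poc set: a PCR whose induced relation `≤_G` is antisymmetric and whose only
negligible element is `0`. -/
def IsPocSet (P : PCS α) (G : Set (α × α)) : Prop :=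
  IsPCR P G ∧ (∀ a b, pcrLe G a b → pcrLe G b a → a = b) ∧
    ∀ a, pcrLe G a (P.star a) → a = P.zero

/-- The thresholded derived relation of a nontrivial real-valued 2-weight is a
non-degenerate PCR. -/
theorem stmt19 [Finite α] (P : PCS α) (ω : α → α → ℝ)
    (hsym : ∀ a b, ω a b = ω b a) (hnn : ∀ a b, 0 ≤ ω a b)
    (h0 : ∀ a, ω P.zero a = 0) (hstar0 : ∀ a, ω a (P.star a) = 0)
    (hconst : ∀ a b, ω a a + ω (P.star a) (P.star a) = ω b b + ω (P.star b) (P.star b))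
    (hsplit : ∀ a b, ω a a = ω a b + ω a (P.star b))
    (hcyc : ∀ a b c, ω a (P.star b) + ω b (P.star c) + ω c (P.star a)
        = ω (P.star a) b + ω (P.star b) c + ω (P.star c) a)
    (htri : ∀ a b c, ω a (P.star c) + ω (P.star a) c
        ≤ ω a (P.star b) + ω (P.star a) b + ω b (P.star c) + ω (P.star b) c)
    (hnontriv : ∃ a b, ω a b ≠ 0)
    (τ : α → α → ℝ) (hτ : ∀ a b, 0 < τ a b ∧ τ a b < 1)
    (hτsym : ∀ a b, τ a b = τ b a ∧ τ a b = τ (P.star a) b)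
    (G : Set (α × α))
    (hGdef : ∀ a b, (a, b) ∈ G ↔
      (({a, P.star a} : Set α) ∩ {b, P.star b} = ∅) ∧
      (ω a (P.star b) <
          min (min (τ a b * (ω a a + ω (P.star a) (P.star a))) (ω a b))
            (min (ω (P.star a) (P.star b)) (ω (P.star a) b)) ∨
        (ω a (P.star b) = 0 ∧ ω (P.star a) b = 0))) :
    Nondegenerate P G := by
  rintro a ⟨ha1, ha2⟩
  -- δ is additive along triples (cocycle identity)
  have hδadd : ∀ x y z,
      (ω (P.star x) y - ω x (P.star y)) + (ω (P.star y) z - ω y (P.star z))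
        = ω (P.star x) z - ω x (P.star z) := by
    intro x y z
    have h := hcyc x y z
    have h1 := hsym z (P.star x)
    have h2 := hsym (P.star z) x
    linarith
  -- along any G-chain, δ ≥ 0, and δ = 0 forces Δ = 0
  have chain : ∀ x y, pcrLe G x y →
      0 ≤ ω (P.star x) y - ω x (P.star y) ∧
      (ω (P.star x) y - ω x (P.star y) = 0 → ω x (P.star y) + ω (P.star x) y = 0) := by
    intro x y h
    induction h with
    | refl =>
      have e1 := hstar0 x
      have e2 := hsym (P.star x) x
      constructor
      · linarith
      · intro _; linarith
    | @tail b c hxb hbc ih =>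
      rcases (hGdef b c).1 hbc with ⟨-, hcase⟩
      have hedge : 0 ≤ ω (P.star b) c - ω b (P.star c) ∧
          (ω (P.star b) c - ω b (P.star c) = 0 →
            ω b (P.star c) = 0 ∧ ω (P.star b) c = 0) := by
        rcases hcase with hlt | ⟨hz1, hz2⟩
        · have hlt' : ω b (P.star c) < ω (P.star b) c :=
            lt_of_lt_of_le hlt ((min_le_right _ _).trans (min_le_right _ _))
          constructor
          · linarith
          · intro h0; linarith
        · constructor
          · rw [hz1, hz2]; simp
          · intro _; exact ⟨hz1, hz2⟩
      have hsum := hδadd x b c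
      constructor
      · linarith [ih.1, hedge.1]
      · intro h0
        have hδxb : ω (P.star x) b - ω x (P.star b) = 0 := by
          linarith [ih.1, hedge.1]
        have hδbc : ω (P.star b) c - ω b (P.star c) = 0 := by
          linarith [ih.1, hedge.1]
        have hΔxb := ih.2 hδxb
        have hΔbc := hedge.2 hδbc
        have htri' := htri x b c
        have n1 := hnn x (P.star c)
        have n2 := hnn (P.star x) c
        linarith [hΔbc.1, hΔbc.2]
  have hss := P.star_star a
  have h1 := chain a (P.star a) ha1
  have h2 := chain (P.star a) a ha2
  rw [hss] at h1 h2
  have hadd := hδadd a (P.star a) a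
  rw [hss] at hadd
  have hδaa : ω (P.star a) a - ω a (P.star a) = 0 := by
    rw [hsym (P.star a) a]; ring
  have hδ0 : ω (P.star a) (P.star a) - ω a a = 0 := by linarith [h1.1, h2.1]
  have hΔ0 : ω a a + ω (P.star a) (P.star a) = 0 := h1.2 hδ0
  obtain ⟨b, c, hbc⟩ := hnontriv
  have hc := hconst b a
  have nb := hnn b b
  have nsb := hnn (P.star b) (P.star b)
  have hbb : ω b b = 0 := by linarith
  have hs := hsplit b c
  have n1 := hnn b c
  have n2 := hnn b (P.star c)
  exact hbc (by linarith)
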